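/- In a weakly involutive quantum B-algebra, x˜ → y = y⁻ ⇝ x and x⁻ ⇝ y = y˜ → x for all x, y. -/
import Mathlib


class QuantumBAlgebra (X : Type*) extends PartialOrder X where
  arr : X → X → X
  sq : X → X → X
  qb1 : ∀ x y z : X, arr y z ≤ arr (arr x y) (arr x z)
  qb2 : ∀ x y z : X, sq y z ≤ arr (sq x y) (sq x z)
  qb3 : ∀ x y z : X, y ≤ z → arr x y ≤ arr x z
  qb4 : ∀ x y z : X, x ≤ arr y z ↔ y ≤ sq x z

open QuantumBAlgebra

section Aux

variable {X : Type*} [QuantumBAlgebra X]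

/-- Transpose of qb2 via qb4. -/
lemma sqII (x y z : X) : sq x y ≤ sq (sq y z) (sq x z) :=
  (qb4 (sq y z) (sq x y) (sq x z)).mp (qb2 x y z)

/-- The key inequality: `sq w u ≤ arr u˜ w˜` for a weakly involutive `d`. -/
lemma key_ineq (d : X) (hwi : ∀ x : X, sq (arr x d) d = x ∧ arr (sq x d) d = x)
    (u w : X) : sq w u ≤ arr (sq u d) (sq w d) := by
  set P := sq w u with hP
  have h1 : arr (sq w d) d ≤ arr (arr P (sq w d)) (arr P d) := qb1 P (sq w d) d
  rw [(hwi w).2] at h1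
  -- h1 : w ≤ arr (arr P (sq w d)) (arr P d)
  have h2 : arr P (sq w d) ≤ sq w (arr P d) :=
    (qb4 w (arr P (sq w d)) (arr P d)).mp h1
  have h3 : sq w (arr P d) ≤ sq (sq (arr P d) d) (sq w d) := sqII w (arr P d) d
  rw [(hwi P).1] at h3
  -- h3 : sq w (arr P d) ≤ sq P (sq w d)
  have h4 : sq u d ≤ arr P (sq w d) := qb2 w u d
  have h5 : sq u d ≤ sq P (sq w d) := h4.trans (h2.trans h3)
  exact (qb4 P (sq u d) (sq w d)).mpr h5

end Aux

theorem stmt11 {X : Type*} [QuantumBAlgebra X] (d : X)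
    (hwi : ∀ x : X, sq (arr x d) d = x ∧ arr (sq x d) d = x) (x y : X) :
    arr (sq x d) y = sq (arr y d) x ∧ sq (arr x d) y = arr (sq y d) x := by
  constructor
  · apply le_antisymm
    · have h1 : arr y d ≤ arr (arr (sq x d) y) (arr (sq x d) d) := qb1 (sq x d) y d
      rw [(hwi x).2] at h1
      exact (qb4 (arr y d) (arr (sq x d) y) x).mp h1
    · have h := key_ineq d hwi x (arr y d)
      rwa [(hwi y).1] at h
  · apply le_antisymm
    · have h := key_ineq d hwi y (arr x d)
      rwa [(hwi x).1] at h
    · have h1 : arr x d ≤ arr (arr (sq y d) x) (arr (sq y d) d) := qb1 (sq y d) x d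
      rw [(hwi y).2] at h1
      exact (qb4 (arr x d) (arr (sq y d) x) y).mp h1
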